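/- Let P, Q be probability measures on a measurable space X and let R be any probability measure on a measurable space Z. Then for every ε ≥ 0, δ_{Q⊗R ‖ P⊗R}(ε) = δ_{Q‖P}(ε). -/

import Mathlib

open MeasureTheory

/-- The privacy curve of the binary experiment `(P,Q)`:
`δ_{Q‖P}(ε) = sup_{A measurable} (Q(A) − e^ε P(A))`. -/
noncomputable def privCurve {X : Type*} [MeasurableSpace X] (P Q : Measure X) (ε : ℝ) : ℝ :=
  ⨆ A : {A : Set X // MeasurableSet A}, ((Q A.1).toReal - Real.exp ε * (P A.1).toReal)

lemma privCurve_bdd {X : Type*} [MeasurableSpace X] (P Q : Measure X) (ε : ℝ)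
    [IsProbabilityMeasure Q] :
    BddAbove (Set.range fun A : {A : Set X // MeasurableSet A} =>
      ((Q A.1).toReal - Real.exp ε * (P A.1).toReal)) := by
  refine ⟨1, ?_⟩
  rintro x ⟨A, rfl⟩
  simp only
  have h1 : (Q A.1).toReal ≤ 1 := by
    have := prob_le_one (μ := Q) (s := A.1)
    simpa using ENNReal.toReal_le_of_le_ofReal zero_le_one (by simpa using this)
  have h2 : 0 ≤ Real.exp ε * (P A.1).toReal :=
    mul_nonneg (Real.exp_pos ε).le ENNReal.toReal_nonneg
  linarith

/-- A common independent factor does not affect privacy curves: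
`δ_{Q⊗R ‖ P⊗R}(ε) = δ_{Q‖P}(ε)` for any probability measure `R` and every `ε ≥ 0`. -/
theorem privacy_curve_common_independent_factor
    {X Z : Type*} [MeasurableSpace X] [MeasurableSpace Z]
    (P Q : Measure X) (R : Measure Z)
    [IsProbabilityMeasure P] [IsProbabilityMeasure Q] [IsProbabilityMeasure R]
    (ε : ℝ) (hε : 0 ≤ ε) :
    privCurve (P.prod R) (Q.prod R) ε = privCurve P Q ε := by
  apply le_antisymm
  · -- ≤ : slice argument
    apply ciSup_le
    rintro ⟨B, hB⟩
    -- slices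
    set g : Z → ℝ := fun z => (Q ((fun x => (x, z)) ⁻¹' B)).toReal with hg_def
    set h : Z → ℝ := fun z => (P ((fun x => (x, z)) ⁻¹' B)).toReal with hh_def
    have hsliceQ : Measurable fun z => Q ((fun x => (x, z)) ⁻¹' B) :=
      measurable_measure_prodMk_right hB
    have hsliceP : Measurable fun z => P ((fun x => (x, z)) ⁻¹' B) :=
      measurable_measure_prodMk_right hB
    have hgm : Measurable g := hsliceQ.ennreal_toReal
    have hhm : Measurable h := hsliceP.ennreal_toReal
    have hQprod : ((Q.prod R) B).toReal = ∫ z, g z ∂ R := by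
      rw [Measure.prod_apply_symm hB]
      rw [integral_toReal hsliceQ.aemeasurable]
      filter_upwards with z
      exact lt_of_le_of_lt (prob_le_one) ENNReal.one_lt_top
    have hPprod : ((P.prod R) B).toReal = ∫ z, h z ∂ R := by
      rw [Measure.prod_apply_symm hB]
      rw [integral_toReal hsliceP.aemeasurable]
      filter_upwards with z
      exact lt_of_le_of_lt (prob_le_one) ENNReal.one_lt_top
    have hgi : Integrable g R := by
      refine ⟨hgm.aestronglyMeasurable, ?_⟩
      apply HasFiniteIntegral.of_bounded (C := 1)
      filter_upwards with z
      rw [Real.norm_eq_abs, abs_of_nonneg ENNReal.toReal_nonneg]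
      exact ENNReal.toReal_le_of_le_ofReal zero_le_one (by simpa using prob_le_one (μ := Q))
    have hhi : Integrable h R := by
      refine ⟨hhm.aestronglyMeasurable, ?_⟩
      apply HasFiniteIntegral.of_bounded (C := 1)
      filter_upwards with z
      rw [Real.norm_eq_abs, abs_of_nonneg ENNReal.toReal_nonneg]
      exact ENNReal.toReal_le_of_le_ofReal zero_le_one (by simpa using prob_le_one (μ := P))
    rw [hQprod, hPprod, ← integral_const_mul, ← integral_sub hgi (hhi.const_mul _)]
    calc ∫ z, (g z - Real.exp ε * h z) ∂ R
        ≤ ∫ _, privCurve P Q ε ∂ R := by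
          apply integral_mono (hgi.sub (hhi.const_mul _)) (integrable_const _)
          intro z
          exact le_ciSup (privCurve_bdd P Q ε)
            ⟨(fun x => (x, z)) ⁻¹' B, hB.preimage (measurable_prodMk_right)⟩
      _ = privCurve P Q ε := by simp
  · -- ≥ : cylinder sets
    apply ciSup_le
    rintro ⟨A, hA⟩
    have key : ∀ (μ : Measure X) [IsProbabilityMeasure μ],
        (μ.prod R) (A ×ˢ Set.univ) = μ A := by
      intro μ _
      rw [Measure.prod_prod]
      simp
    have := le_ciSup (privCurve_bdd (P.prod R) (Q.prod R) ε)
      ⟨A ×ˢ Set.univ, hA.prod MeasurableSet.univ⟩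
    simpa [key P, key Q, privCurve] using this
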